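/- In a completely randomized experiment with 2 ≤ N₁ ≤ N−2, Neyman's variance estimator V̂ = s₁²/N₁ + s₀²/N₀ satisfies E[V̂] − Var(τ̂) = S_τ²/N ≥ 0; in particular E[V̂] ≥ Var(τ̂), with equality if and only if the individual causal effects are constant, i.e., Y_i(1) − Y_i(0) = τ for all i (equivalently S_τ² = 0). -/

import Mathlib

open Finset

noncomputable section

/-- Completely randomized assignments: vectors in `{0,1}^N` with exactly `N₁` ones. -/
def CRD (N N₁ : ℕ) : Finset (Fin N → Bool) :=
  Finset.univ.filter fun T => (Finset.univ.filter fun i => T i = true).card = N₁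

noncomputable def crdExp (N N₁ : ℕ) (f : (Fin N → Bool) → ℝ) : ℝ :=
  (∑ T ∈ CRD N N₁, f T) / ((CRD N N₁).card : ℝ)

noncomputable def crdVar (N N₁ : ℕ) (f : (Fin N → Bool) → ℝ) : ℝ :=
  crdExp N N₁ fun T => (f T - crdExp N N₁ f) ^ 2

/-- The difference-in-means estimator based on observed outcomes
`Yᵢobs = Tᵢ Yᵢ(1) + (1−Tᵢ) Yᵢ(0)`. -/
noncomputable def tauhat (N N₁ : ℕ) (Y1 Y0 : Fin N → ℝ) (T : Fin N → Bool) : ℝ :=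
  (∑ i, if T i then Y1 i else 0) / (N₁ : ℝ)
    - (∑ i, if T i then 0 else Y0 i) / ((N - N₁ : ℕ) : ℝ)

noncomputable def ybar1obs (N N₁ : ℕ) (Y1 : Fin N → ℝ) (T : Fin N → Bool) : ℝ :=
  (∑ i, if T i then Y1 i else 0) / (N₁ : ℝ)

noncomputable def ybar0obs (N N₁ : ℕ) (Y0 : Fin N → ℝ) (T : Fin N → Bool) : ℝ :=
  (∑ i, if T i then 0 else Y0 i) / ((N - N₁ : ℕ) : ℝ)

/-- Sample variance of the observed outcomes in the treated group. -/
noncomputable def s1sq (N N₁ : ℕ) (Y1 : Fin N → ℝ) (T : Fin N → Bool) : ℝ :=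
  (∑ i, if T i then (Y1 i - ybar1obs N N₁ Y1 T) ^ 2 else 0) / ((N₁ : ℝ) - 1)

/-- Sample variance of the observed outcomes in the control group. -/
noncomputable def s0sq (N N₁ : ℕ) (Y0 : Fin N → ℝ) (T : Fin N → Bool) : ℝ :=
  (∑ i, if T i then 0 else (Y0 i - ybar0obs N N₁ Y0 T) ^ 2)
    / (((N - N₁ : ℕ) : ℝ) - 1)

/-- Neyman's variance estimator `V̂ = s₁²/N₁ + s₀²/N₀`. -/
noncomputable def neymanVhat (N N₁ : ℕ) (Y1 Y0 : Fin N → ℝ) (T : Fin N → Bool) : ℝ :=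
  s1sq N N₁ Y1 T / (N₁ : ℝ) + s0sq N N₁ Y0 T / ((N - N₁ : ℕ) : ℝ)

section Aux
variable {N N₁ : ℕ}

lemma crd_transfer (f : (Fin N → Bool) → ℝ) :
    ∑ T ∈ CRD N N₁, f T
      = ∑ A ∈ (univ : Finset (Fin N)).powersetCard N₁, f (fun i => decide (i ∈ A)) := by
  refine Finset.sum_nbij' (fun T => univ.filter fun i => T i = true)
    (fun A => fun i => decide (i ∈ A)) ?_ ?_ ?_ ?_ ?_
  · intro T hT
    simp only [CRD, mem_filter, mem_univ, true_and] at hT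
    simp [Finset.mem_powersetCard, hT]
  · intro A hA
    simp only [Finset.mem_powersetCard] at hA
    simp only [CRD, mem_filter, mem_univ, true_and]
    rw [← hA.2]
    congr 1
    ext i; simp
  · intro T hT; funext i; simp
  · intro A hA; ext i; simp
  · intro T hT; congr 1; funext i; simp

lemma count_one (h1 : 1 ≤ N₁) (i : Fin N) :
    (((univ : Finset (Fin N)).powersetCard N₁).filter fun A => i ∈ A).card
      = (N - 1).choose (N₁ - 1) := by
  have : (((univ : Finset (Fin N)).powersetCard N₁).filter fun A => i ∈ A).card
      = ((univ.erase i).powersetCard (N₁ - 1)).card := by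
    refine Finset.card_bij' (fun A _ => A.erase i) (fun B _ => insert i B) ?_ ?_ ?_ ?_
    · intro A hA
      simp only [mem_filter, Finset.mem_powersetCard] at hA
      rw [Finset.mem_powersetCard]
      exact ⟨Finset.erase_subset_erase i hA.1.1, by rw [Finset.card_erase_of_mem hA.2, hA.1.2]⟩
    · intro B hB
      rw [Finset.mem_powersetCard] at hB
      have hiB : i ∉ B := fun h => (Finset.mem_erase.mp (hB.1 h)).1 rfl
      simp only [mem_filter, Finset.mem_powersetCard]
      refine ⟨⟨Finset.subset_univ _, ?_⟩, Finset.mem_insert_self _ _⟩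
      rw [Finset.card_insert_of_notMem hiB, hB.2]
      omega
    · intro A hA
      simp only [mem_filter] at hA
      exact Finset.insert_erase hA.2
    · intro B hB
      rw [Finset.mem_powersetCard] at hB
      have hiB : i ∉ B := fun h => (Finset.mem_erase.mp (hB.1 h)).1 rfl
      exact Finset.erase_insert hiB
  rw [this, Finset.card_powersetCard, Finset.card_erase_of_mem (mem_univ i), card_univ,
    Fintype.card_fin]

lemma count_two (h2 : 2 ≤ N₁) {i j : Fin N} (hij : i ≠ j) :
    (((univ : Finset (Fin N)).powersetCard N₁).filter fun A => i ∈ A ∧ j ∈ A).card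
      = (N - 2).choose (N₁ - 2) := by
  have : (((univ : Finset (Fin N)).powersetCard N₁).filter fun A => i ∈ A ∧ j ∈ A).card
      = (((univ.erase i).erase j).powersetCard (N₁ - 2)).card := by
    refine Finset.card_bij' (fun A _ => (A.erase i).erase j) (fun B _ => insert i (insert j B))
      ?_ ?_ ?_ ?_
    · intro A hA
      simp only [mem_filter, Finset.mem_powersetCard] at hA
      rw [Finset.mem_powersetCard]
      constructor
      · exact Finset.erase_subset_erase j (Finset.erase_subset_erase i hA.1.1)
      · rw [Finset.card_erase_of_mem (Finset.mem_erase.mpr ⟨hij.symm, hA.2.2⟩),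
          Finset.card_erase_of_mem hA.2.1, hA.1.2]
        omega
    · intro B hB
      rw [Finset.mem_powersetCard] at hB
      have hjB : j ∉ B := fun h => (Finset.mem_erase.mp (hB.1 h)).1 rfl
      have hiB : i ∉ B := fun h => (Finset.mem_erase.mp (Finset.mem_of_mem_erase (hB.1 h))).1 rfl
      simp only [mem_filter, Finset.mem_powersetCard]
      refine ⟨⟨Finset.subset_univ _, ?_⟩, Finset.mem_insert_self _ _,
        Finset.mem_insert_of_mem (Finset.mem_insert_self _ _)⟩
      rw [Finset.card_insert_of_notMem (by simp [hij, hiB]),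
        Finset.card_insert_of_notMem hjB, hB.2]
      omega
    · intro A hA
      simp only [mem_filter] at hA
      ext x
      simp only [Finset.mem_insert, Finset.mem_erase]
      constructor
      · rintro (rfl | rfl | ⟨_, _, h⟩) <;> [exact hA.2.1; exact hA.2.2; exact h]
      · intro hx
        by_cases hxi : x = i
        · exact Or.inl hxi
        by_cases hxj : x = j
        · exact Or.inr (Or.inl hxj)
        · exact Or.inr (Or.inr ⟨hxj, hxi, hx⟩)
    · intro B hB
      rw [Finset.mem_powersetCard] at hB
      have hjB : j ∉ B := fun h => (Finset.mem_erase.mp (hB.1 h)).1 rfl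
      have hiB : i ∉ B := fun h => (Finset.mem_erase.mp (Finset.mem_of_mem_erase (hB.1 h))).1 rfl
      ext x
      simp only [Finset.mem_erase, Finset.mem_insert]
      constructor
      · rintro ⟨hxj, hxi, (rfl | rfl | h)⟩ <;> [exact absurd rfl hxi; exact absurd rfl hxj; exact h]
      · intro hx
        exact ⟨fun h => hjB (h ▸ hx), fun h => hiB (h ▸ hx), Or.inr (Or.inr hx)⟩
  rw [this, Finset.card_powersetCard, Finset.card_erase_of_mem
    (Finset.mem_erase.mpr ⟨hij.symm, mem_univ j⟩), Finset.card_erase_of_mem (mem_univ i),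
    card_univ, Fintype.card_fin]
  congr 1

lemma crd_card : (CRD N N₁).card = N.choose N₁ := by
  have h := crd_transfer (N := N) (N₁ := N₁) (fun _ => (1 : ℝ))
  simp only [Finset.sum_const, nsmul_eq_mul, mul_one] at h
  have h2 : (CRD N N₁).card = ((univ : Finset (Fin N)).powersetCard N₁).card := by
    exact_mod_cast h
  rw [h2, Finset.card_powersetCard, card_univ, Fintype.card_fin]

lemma crd_sum_one (h1 : 1 ≤ N₁) (u : Fin N → ℝ) :
    ∑ T ∈ CRD N N₁, (∑ i, if T i then u i else 0)
      = ((N - 1).choose (N₁ - 1) : ℝ) * ∑ i, u i := by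
  rw [crd_transfer]
  simp only [decide_eq_true_eq]
  rw [Finset.sum_comm]
  have : ∀ i : Fin N, ∑ A ∈ (univ : Finset (Fin N)).powersetCard N₁,
      (if i ∈ A then u i else 0) = ((N - 1).choose (N₁ - 1) : ℝ) * u i := by
    intro i
    rw [← Finset.sum_filter, Finset.sum_const, count_one h1 i, nsmul_eq_mul]
  rw [Finset.sum_congr rfl fun i _ => this i, ← Finset.mul_sum]

lemma crd_sum_two (h2 : 2 ≤ N₁) (u v : Fin N → ℝ) :
    ∑ T ∈ CRD N N₁, (∑ i, if T i then u i else 0) * (∑ j, if T j then v j else 0)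
      = ((N - 1).choose (N₁ - 1) : ℝ) * (∑ i, u i * v i)
        + ((N - 2).choose (N₁ - 2) : ℝ)
            * ((∑ i, u i) * (∑ i, v i) - ∑ i, u i * v i) := by
  rw [crd_transfer]
  simp only [decide_eq_true_eq]
  have expand : ∀ A : Finset (Fin N),
      (∑ i, if i ∈ A then u i else 0) * (∑ j, if j ∈ A then v j else 0)
        = ∑ i, ∑ j, (if i ∈ A ∧ j ∈ A then u i * v j else 0) := by
    intro A
    rw [Finset.sum_mul_sum]
    refine Finset.sum_congr rfl fun i _ => Finset.sum_congr rfl fun j _ => ?_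
    by_cases hi : i ∈ A <;> by_cases hj : j ∈ A <;> simp [hi, hj]
  rw [Finset.sum_congr rfl fun A _ => expand A, Finset.sum_comm]
  have inner : ∀ i : Fin N,
      ∑ A ∈ (univ : Finset (Fin N)).powersetCard N₁, ∑ j, (if i ∈ A ∧ j ∈ A then u i * v j else 0)
        = ((N - 1).choose (N₁ - 1) : ℝ) * (u i * v i)
          + ((N - 2).choose (N₁ - 2) : ℝ) * (u i * ((∑ k, v k) - v i)) := by
    intro i
    rw [Finset.sum_comm]
    have term : ∀ j : Fin N,
        ∑ A ∈ (univ : Finset (Fin N)).powersetCard N₁, (if i ∈ A ∧ j ∈ A then u i * v j else 0)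
          = ((((univ : Finset (Fin N)).powersetCard N₁).filter
              fun A => i ∈ A ∧ j ∈ A).card : ℝ) * (u i * v j) := by
      intro j
      rw [← Finset.sum_filter, Finset.sum_const, nsmul_eq_mul]
    rw [Finset.sum_congr rfl fun j _ => term j,
      ← Finset.add_sum_erase (univ : Finset (Fin N)) _ (mem_univ i)]
    have diag : ((((univ : Finset (Fin N)).powersetCard N₁).filter
        fun A => i ∈ A ∧ i ∈ A).card : ℝ) = ((N - 1).choose (N₁ - 1) : ℝ) := by
      norm_cast
      simp only [and_self]
      exact count_one (by omega) i
    have off : ∀ j ∈ (univ : Finset (Fin N)).erase i,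
        ((((univ : Finset (Fin N)).powersetCard N₁).filter
            fun A => i ∈ A ∧ j ∈ A).card : ℝ) * (u i * v j)
          = ((N - 2).choose (N₁ - 2) : ℝ) * (u i * v j) := by
      intro j hj
      rw [count_two h2 (Ne.symm (Finset.mem_erase.mp hj).1)]
    rw [diag, Finset.sum_congr rfl off, ← Finset.mul_sum, ← Finset.mul_sum,
      Finset.sum_erase_eq_sub (mem_univ i), mul_sub]
  rw [Finset.sum_congr rfl fun i _ => inner i]
  simp only [Finset.sum_add_distrib, ← Finset.mul_sum]
  congr 1
  congr 1
  rw [Finset.sum_congr rfl (fun i _ => by ring :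
    ∀ i ∈ (univ : Finset (Fin N)), u i * ((∑ k, v k) - v i) = u i * (∑ k, v k) - u i * v i),
    Finset.sum_sub_distrib, ← Finset.sum_mul]

lemma crd_count_mem {T : Fin N → Bool} (hT : T ∈ CRD N N₁) :
    (∑ i, if T i then (1 : ℝ) else 0) = (N₁ : ℝ) := by
  simp only [CRD, mem_filter, mem_univ, true_and] at hT
  rw [Finset.sum_boole]
  norm_cast

lemma aux_div (X S L m c : ℝ) (hm : m ≠ 0) (hc : c = (S - L) / m) :
    X - 2 * c * (S - L) + c ^ 2 * m = X - (S - L) * (S - L) / m := by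
  subst hc
  field_simp
  ring

lemma compl_sum (T : Fin N → Bool) (w : Fin N → ℝ) :
    (∑ i, if T i then 0 else w i) = (∑ i, w i) - ∑ i, if T i then w i else 0 := by
  rw [← Finset.sum_sub_distrib]
  exact Finset.sum_congr rfl fun i _ => by by_cases h : T i <;> simp [h]

lemma tauhat_eq (Y1 Y0 : Fin N → ℝ) (T : Fin N → Bool) :
    tauhat N N₁ Y1 Y0 T
      = (∑ i, if T i then Y1 i else 0) / (N₁ : ℝ)
        - ((∑ i, Y0 i) - ∑ i, if T i then Y0 i else 0) / ((N - N₁ : ℕ) : ℝ) := by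
  rw [tauhat, compl_sum]

lemma s1sq_eq {T : Fin N → Bool} (hT : T ∈ CRD N N₁) (hk : (N₁ : ℝ) ≠ 0) (Y1 : Fin N → ℝ) :
    s1sq N N₁ Y1 T
      = ((∑ i, if T i then Y1 i * Y1 i else 0)
          - (∑ i, if T i then Y1 i else 0) * (∑ i, if T i then Y1 i else 0) / (N₁ : ℝ))
        / ((N₁ : ℝ) - 1) := by
  unfold s1sq ybar1obs
  set L := ∑ i, if T i then Y1 i else (0 : ℝ) with hL
  have pt : ∀ i, (if T i then (Y1 i - L / (N₁ : ℝ)) ^ 2 else 0)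
      = (if T i then Y1 i * Y1 i else 0) - (2 * (L / (N₁ : ℝ))) * (if T i then Y1 i else 0)
          + (L / (N₁ : ℝ)) ^ 2 * (if T i then (1 : ℝ) else 0) := by
    intro i
    by_cases h : T i <;> simp [h] <;> ring
  rw [Finset.sum_congr rfl fun i _ => pt i]
  rw [Finset.sum_add_distrib, Finset.sum_sub_distrib, ← Finset.mul_sum, ← Finset.mul_sum,
    crd_count_mem hT, ← hL]
  congr 1
  field_simp
  ring

lemma s0sq_eq {T : Fin N → Bool} (hT : T ∈ CRD N N₁) (hNN : N₁ ≤ N)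
    (hm : ((N - N₁ : ℕ) : ℝ) ≠ 0) (Y0 : Fin N → ℝ) :
    s0sq N N₁ Y0 T
      = (((∑ i, Y0 i * Y0 i) - ∑ i, if T i then Y0 i * Y0 i else 0)
          - ((∑ i, Y0 i) - ∑ i, if T i then Y0 i else 0)
            * ((∑ i, Y0 i) - ∑ i, if T i then Y0 i else 0) / ((N - N₁ : ℕ) : ℝ))
        / (((N - N₁ : ℕ) : ℝ) - 1) := by
  have hy : ybar0obs N N₁ Y0 T
      = ((∑ i, Y0 i) - ∑ i, if T i then Y0 i else 0) / ((N - N₁ : ℕ) : ℝ) := by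
    unfold ybar0obs
    rw [compl_sum]
  unfold s0sq
  rw [hy]
  set L := ∑ i, if T i then Y0 i else (0 : ℝ) with hL
  set c := ((∑ i, Y0 i) - L) / ((N - N₁ : ℕ) : ℝ) with hc
  have pt : ∀ i, (if T i then 0 else (Y0 i - c) ^ 2)
      = (Y0 i * Y0 i - (if T i then Y0 i * Y0 i else 0))
          - (2 * c) * (Y0 i - (if T i then Y0 i else 0))
          + c ^ 2 * (1 - (if T i then (1 : ℝ) else 0)) := by
    intro i
    by_cases h : T i <;> simp [h] <;> ring
  rw [Finset.sum_congr rfl fun i _ => pt i]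
  have e5 : ∑ x, 2 * c * (Y0 x - if T x then Y0 x else 0) = 2 * c * ((∑ i, Y0 i) - L) := by
    rw [← Finset.mul_sum, Finset.sum_sub_distrib, ← hL]
  have e6 : ∑ x, c ^ 2 * (1 - if T x then (1 : ℝ) else 0)
      = c ^ 2 * ((N : ℝ) - (N₁ : ℝ)) := by
    rw [← Finset.mul_sum, Finset.sum_sub_distrib, crd_count_mem hT, Finset.sum_const,
      card_univ, Fintype.card_fin, nsmul_eq_mul, mul_one]
  have hmn : ((N : ℝ) - (N₁ : ℝ)) = ((N - N₁ : ℕ) : ℝ) := by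
    rw [Nat.cast_sub hNN]
  rw [Finset.sum_add_distrib, Finset.sum_sub_distrib, Finset.sum_sub_distrib, e5, e6, hmn]
  congr 1
  exact aux_div _ _ _ _ _ hm hc

lemma crdVar_eq (f : (Fin N → Bool) → ℝ) (h : ((CRD N N₁).card : ℝ) ≠ 0) :
    crdVar N N₁ f
      = (∑ T ∈ CRD N N₁, f T * f T) / ((CRD N N₁).card : ℝ)
        - ((∑ T ∈ CRD N N₁, f T) / ((CRD N N₁).card : ℝ)) ^ 2 := by
  unfold crdVar crdExp
  set μ := (∑ T ∈ CRD N N₁, f T) / ((CRD N N₁).card : ℝ) with hμ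
  have pt : ∀ T, (f T - μ) ^ 2 = f T * f T - (2 * μ) * f T + μ ^ 2 := fun T => by ring
  rw [Finset.sum_congr rfl fun T _ => pt T, Finset.sum_add_distrib, Finset.sum_sub_distrib,
    ← Finset.mul_sum, Finset.sum_const, nsmul_eq_mul]
  rw [hμ]
  field_simp
  ring

end Aux

lemma alg1 (k n Sa Qa : ℝ) (hk : k ≠ 0) (hk1 : k - 1 ≠ 0) (hn : n ≠ 0) (hn1 : n - 1 ≠ 0) :
    ((k/n) * Qa - ((k/n) * Qa + (k*(k-1)/(n*(n-1))) * (Sa * Sa - Qa)) / k) / (k - 1)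
      = (n * Qa - Sa ^ 2) / (n * (n - 1)) := by
  field_simp
  ring

lemma alg0 (k m n Sb Qb : ℝ) (hk : k ≠ 0) (hm : m ≠ 0) (hm1 : m - 1 ≠ 0)
    (hn : n ≠ 0) (hn1 : n - 1 ≠ 0) (hnm : n = k + m) :
    ((1 - k/n) * Qb - (Sb * Sb - 2 * Sb * ((k/n) * Sb)
        + ((k/n) * Qb + (k*(k-1)/(n*(n-1))) * (Sb * Sb - Qb))) / m) / (m - 1)
      = (n * Qb - Sb ^ 2) / (n * (n - 1)) := by
  subst hnm
  field_simp
  ring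

lemma alg2 (k m n Sa Sb Qa Qb P : ℝ) (hk : k ≠ 0) (hm : m ≠ 0)
    (hn : n ≠ 0) (hn1 : n - 1 ≠ 0) (hnm : n = k + m) :
    ((1/k^2) * ((k/n) * Qa + (k*(k-1)/(n*(n-1))) * (Sa * Sa - Qa))
      + (2/(k*m)) * ((k/n) * P + (k*(k-1)/(n*(n-1))) * (Sa * Sb - P))
      + (1/m^2) * ((k/n) * Qb + (k*(k-1)/(n*(n-1))) * (Sb * Sb - Qb))
      + (-2*Sb/(k*m)) * ((k/n) * Sa)
      + (-2*Sb/m^2) * ((k/n) * Sb)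
      + Sb*Sb/m^2)
      - ((k/n) * Sa / k - (Sb - (k/n) * Sb) / m) ^ 2
      = (n * Qa - Sa ^ 2) / (n * (n - 1)) / k + (n * Qb - Sb ^ 2) / (n * (n - 1)) / m
        - (n * (Qa + Qb - 2*P) - (Sa - Sb) ^ 2) / (n * (n - 1)) / n := by
  subst hnm
  field_simp
  ring

set_option maxHeartbeats 1600000 in
/-- Neyman's variance estimator satisfies
`E[V̂] − Var(τ̂) = S_τ²/N ≥ 0`; in particular `E[V̂] ≥ Var(τ̂)`, with equality if
and only if the individual causal effects are constant, `Yᵢ(1) − Yᵢ(0) = τ` for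
all `i` (equivalently `S_τ² = 0`). -/
theorem stmt6 (N N₁ : ℕ) (h1 : 2 ≤ N₁) (h2 : N₁ ≤ N - 2) (Y1 Y0 : Fin N → ℝ) :
    crdExp N N₁ (neymanVhat N N₁ Y1 Y0) - crdVar N N₁ (tauhat N N₁ Y1 Y0)
      = ((∑ i, ((Y1 i - Y0 i) - (∑ j, (Y1 j - Y0 j)) / (N : ℝ)) ^ 2)
          / ((N : ℝ) - 1)) / (N : ℝ) ∧
    (0 : ℝ) ≤ ((∑ i, ((Y1 i - Y0 i) - (∑ j, (Y1 j - Y0 j)) / (N : ℝ)) ^ 2)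
          / ((N : ℝ) - 1)) / (N : ℝ) ∧
    crdVar N N₁ (tauhat N N₁ Y1 Y0) ≤ crdExp N N₁ (neymanVhat N N₁ Y1 Y0) ∧
    (crdExp N N₁ (neymanVhat N N₁ Y1 Y0) = crdVar N N₁ (tauhat N N₁ Y1 Y0)
      ↔ ∀ i, Y1 i - Y0 i = (∑ j, (Y1 j - Y0 j)) / (N : ℝ)) ∧
    ((∀ i, Y1 i - Y0 i = (∑ j, (Y1 j - Y0 j)) / (N : ℝ))
      ↔ (∑ i, ((Y1 i - Y0 i) - (∑ j, (Y1 j - Y0 j)) / (N : ℝ)) ^ 2)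
          / ((N : ℝ) - 1) = 0) := by
  have hNN : N₁ ≤ N := by omega
  have hN4 : 4 ≤ N := by omega
  have hk0 : (N₁ : ℝ) ≠ 0 := Nat.cast_ne_zero.mpr (by omega)
  have hk2 : (2 : ℝ) ≤ (N₁ : ℝ) := by exact_mod_cast h1
  have hk1 : (N₁ : ℝ) - 1 ≠ 0 := ne_of_gt (by linarith)
  have hm0 : ((N - N₁ : ℕ) : ℝ) ≠ 0 := Nat.cast_ne_zero.mpr (by omega)
  have hm2 : (2 : ℝ) ≤ ((N - N₁ : ℕ) : ℝ) := by exact_mod_cast (show 2 ≤ N - N₁ by omega)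
  have hm1 : ((N - N₁ : ℕ) : ℝ) - 1 ≠ 0 := ne_of_gt (by linarith)
  have hn4 : (4 : ℝ) ≤ (N : ℝ) := by exact_mod_cast hN4
  have hn0 : (N : ℝ) ≠ 0 := by positivity
  have hn1 : (N : ℝ) - 1 ≠ 0 := ne_of_gt (by linarith)
  have hc0 : ((N.choose N₁ : ℕ) : ℝ) ≠ 0 :=
    Nat.cast_ne_zero.mpr (Nat.choose_pos hNN).ne'
  have hcard : ((CRD N N₁).card : ℝ) = ((N.choose N₁ : ℕ) : ℝ) := by rw [crd_card]
  have hmn : ((N - N₁ : ℕ) : ℝ) = (N : ℝ) - (N₁ : ℝ) := Nat.cast_sub hNN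
  have hnm : (N : ℝ) = (N₁ : ℝ) + ((N - N₁ : ℕ) : ℝ) := by rw [hmn]; ring
  -- binomial relations
  have e1 : N - 1 + 1 = N := by omega
  have e2 : N₁ - 1 + 1 = N₁ := by omega
  have e3 : N - 2 + 1 = N - 1 := by omega
  have e4 : N₁ - 2 + 1 = N₁ - 1 := by omega
  have R1nat : N * (N - 1).choose (N₁ - 1) = N.choose N₁ * N₁ := by
    have h := Nat.add_one_mul_choose_eq (N - 1) (N₁ - 1)
    simp only [Nat.succ_eq_add_one, e1, e2] at h
    exact h
  have R2nat : (N - 1) * (N - 2).choose (N₁ - 2) = (N - 1).choose (N₁ - 1) * (N₁ - 1) := by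
    have h := Nat.add_one_mul_choose_eq (N - 2) (N₁ - 2)
    simp only [Nat.succ_eq_add_one, e3, e4] at h
    exact h
  have hn1cast : ((N - 1 : ℕ) : ℝ) = (N : ℝ) - 1 := by
    rw [Nat.cast_sub (by omega)]; norm_num
  have hk1cast : ((N₁ - 1 : ℕ) : ℝ) = (N₁ : ℝ) - 1 := by
    rw [Nat.cast_sub (by omega)]; norm_num
  have R1 : (N : ℝ) * ((N - 1).choose (N₁ - 1) : ℝ) = (N.choose N₁ : ℝ) * (N₁ : ℝ) := by
    exact_mod_cast R1nat
  have R2 : ((N : ℝ) - 1) * ((N - 2).choose (N₁ - 2) : ℝ)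
      = ((N - 1).choose (N₁ - 1) : ℝ) * ((N₁ : ℝ) - 1) := by
    rw [← hn1cast, ← hk1cast]
    exact_mod_cast R2nat
  have hp1 : ((N - 1).choose (N₁ - 1) : ℝ)
      = ((N₁ : ℝ) / (N : ℝ)) * (N.choose N₁ : ℝ) := by
    field_simp
    linarith [R1]
  have hp2 : ((N - 2).choose (N₁ - 2) : ℝ)
      = ((N₁ : ℝ) * ((N₁ : ℝ) - 1) / ((N : ℝ) * ((N : ℝ) - 1))) * (N.choose N₁ : ℝ) := by
    rw [hp1] at R2
    field_simp at R2 ⊢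
    linarith [R2]
  -- sum computations
  have hT1 : ∑ T ∈ CRD N N₁, tauhat N N₁ Y1 Y0 T
      = (((N - 1).choose (N₁ - 1) : ℝ) * ∑ i, Y1 i) / (N₁ : ℝ)
        - ((N.choose N₁ : ℝ) * (∑ i, Y0 i)
            - ((N - 1).choose (N₁ - 1) : ℝ) * ∑ i, Y0 i) / ((N - N₁ : ℕ) : ℝ) := by
    rw [Finset.sum_congr rfl fun T _ => tauhat_eq Y1 Y0 T, Finset.sum_sub_distrib,
      ← Finset.sum_div, ← Finset.sum_div, crd_sum_one (by omega) Y1,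
      Finset.sum_sub_distrib, Finset.sum_const, nsmul_eq_mul,
      crd_sum_one (by omega) Y0, crd_card]
  have hT2 : ∑ T ∈ CRD N N₁, tauhat N N₁ Y1 Y0 T * tauhat N N₁ Y1 Y0 T
      = (1 / (N₁ : ℝ) ^ 2) * (((N - 1).choose (N₁ - 1) : ℝ) * (∑ i, Y1 i * Y1 i)
            + ((N - 2).choose (N₁ - 2) : ℝ)
                * ((∑ i, Y1 i) * (∑ i, Y1 i) - ∑ i, Y1 i * Y1 i))
        + (2 / ((N₁ : ℝ) * ((N - N₁ : ℕ) : ℝ)))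
            * (((N - 1).choose (N₁ - 1) : ℝ) * (∑ i, Y1 i * Y0 i)
                + ((N - 2).choose (N₁ - 2) : ℝ)
                    * ((∑ i, Y1 i) * (∑ i, Y0 i) - ∑ i, Y1 i * Y0 i))
        + (1 / ((N - N₁ : ℕ) : ℝ) ^ 2)
            * (((N - 1).choose (N₁ - 1) : ℝ) * (∑ i, Y0 i * Y0 i)
                + ((N - 2).choose (N₁ - 2) : ℝ)
                    * ((∑ i, Y0 i) * (∑ i, Y0 i) - ∑ i, Y0 i * Y0 i))
        + (-2 * (∑ i, Y0 i) / ((N₁ : ℝ) * ((N - N₁ : ℕ) : ℝ)))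
            * (((N - 1).choose (N₁ - 1) : ℝ) * ∑ i, Y1 i)
        + (-2 * (∑ i, Y0 i) / ((N - N₁ : ℕ) : ℝ) ^ 2)
            * (((N - 1).choose (N₁ - 1) : ℝ) * ∑ i, Y0 i)
        + (N.choose N₁ : ℝ) * ((∑ i, Y0 i) * (∑ i, Y0 i) / ((N - N₁ : ℕ) : ℝ) ^ 2) := by
    have pt : ∀ T ∈ CRD N N₁, tauhat N N₁ Y1 Y0 T * tauhat N N₁ Y1 Y0 T
        = (1 / (N₁ : ℝ) ^ 2) * ((∑ i, if T i then Y1 i else 0) * (∑ j, if T j then Y1 j else 0))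
          + (2 / ((N₁ : ℝ) * ((N - N₁ : ℕ) : ℝ)))
              * ((∑ i, if T i then Y1 i else 0) * (∑ j, if T j then Y0 j else 0))
          + (1 / ((N - N₁ : ℕ) : ℝ) ^ 2)
              * ((∑ i, if T i then Y0 i else 0) * (∑ j, if T j then Y0 j else 0))
          + (-2 * (∑ i, Y0 i) / ((N₁ : ℝ) * ((N - N₁ : ℕ) : ℝ)))
              * (∑ i, if T i then Y1 i else 0)
          + (-2 * (∑ i, Y0 i) / ((N - N₁ : ℕ) : ℝ) ^ 2) * (∑ i, if T i then Y0 i else 0)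
          + (∑ i, Y0 i) * (∑ i, Y0 i) / ((N - N₁ : ℕ) : ℝ) ^ 2 := by
      intro T _
      rw [tauhat_eq]
      ring
    rw [Finset.sum_congr rfl pt]
    simp only [Finset.sum_add_distrib, ← Finset.mul_sum]
    rw [crd_sum_two h1 Y1 Y1, crd_sum_two h1 Y1 Y0, crd_sum_two h1 Y0 Y0,
      crd_sum_one (by omega) Y1, crd_sum_one (by omega) Y0,
      Finset.sum_const, nsmul_eq_mul, crd_card]
  have hS1 : ∑ T ∈ CRD N N₁, s1sq N N₁ Y1 T
      = (((N - 1).choose (N₁ - 1) : ℝ) * (∑ i, Y1 i * Y1 i)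
          - (((N - 1).choose (N₁ - 1) : ℝ) * (∑ i, Y1 i * Y1 i)
              + ((N - 2).choose (N₁ - 2) : ℝ)
                  * ((∑ i, Y1 i) * (∑ i, Y1 i) - ∑ i, Y1 i * Y1 i)) / (N₁ : ℝ))
        / ((N₁ : ℝ) - 1) := by
    rw [Finset.sum_congr rfl fun T hT => s1sq_eq hT hk0 Y1, ← Finset.sum_div,
      Finset.sum_sub_distrib, ← Finset.sum_div,
      crd_sum_one (by omega) (fun i => Y1 i * Y1 i), crd_sum_two h1 Y1 Y1]
  have hA0 : ∑ T ∈ CRD N N₁, ((∑ i, Y0 i * Y0 i) - ∑ i, if T i then Y0 i * Y0 i else 0)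
      = (N.choose N₁ : ℝ) * (∑ i, Y0 i * Y0 i)
        - ((N - 1).choose (N₁ - 1) : ℝ) * (∑ i, Y0 i * Y0 i) := by
    rw [Finset.sum_sub_distrib, Finset.sum_const, nsmul_eq_mul, crd_card,
      crd_sum_one (by omega) (fun i => Y0 i * Y0 i)]
  have hB0 : ∑ T ∈ CRD N N₁, (((∑ i, Y0 i) - ∑ i, if T i then Y0 i else 0)
        * ((∑ i, Y0 i) - ∑ i, if T i then Y0 i else 0))
      = (N.choose N₁ : ℝ) * ((∑ i, Y0 i) * (∑ i, Y0 i))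
        - (2 * (∑ i, Y0 i)) * (((N - 1).choose (N₁ - 1) : ℝ) * ∑ i, Y0 i)
        + (((N - 1).choose (N₁ - 1) : ℝ) * (∑ i, Y0 i * Y0 i)
            + ((N - 2).choose (N₁ - 2) : ℝ)
                * ((∑ i, Y0 i) * (∑ i, Y0 i) - ∑ i, Y0 i * Y0 i)) := by
    have pt : ∀ T ∈ CRD N N₁,
        ((∑ i, Y0 i) - ∑ i, if T i then Y0 i else 0)
            * ((∑ i, Y0 i) - ∑ i, if T i then Y0 i else 0)
          = (∑ i, Y0 i) * (∑ i, Y0 i)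
            - (2 * (∑ i, Y0 i)) * (∑ i, if T i then Y0 i else 0)
            + (∑ i, if T i then Y0 i else 0) * (∑ j, if T j then Y0 j else 0) := by
      intro T _
      ring
    rw [Finset.sum_congr rfl pt]
    simp only [Finset.sum_add_distrib, Finset.sum_sub_distrib, ← Finset.mul_sum]
    rw [crd_sum_two h1 Y0 Y0, crd_sum_one (by omega) Y0, Finset.sum_const,
      nsmul_eq_mul, crd_card]
    ring
  have hS0 : ∑ T ∈ CRD N N₁, s0sq N N₁ Y0 T
      = (((N.choose N₁ : ℝ) * (∑ i, Y0 i * Y0 i)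
            - ((N - 1).choose (N₁ - 1) : ℝ) * (∑ i, Y0 i * Y0 i))
          - ((N.choose N₁ : ℝ) * ((∑ i, Y0 i) * (∑ i, Y0 i))
              - (2 * (∑ i, Y0 i)) * (((N - 1).choose (N₁ - 1) : ℝ) * ∑ i, Y0 i)
              + (((N - 1).choose (N₁ - 1) : ℝ) * (∑ i, Y0 i * Y0 i)
                  + ((N - 2).choose (N₁ - 2) : ℝ)
                      * ((∑ i, Y0 i) * (∑ i, Y0 i) - ∑ i, Y0 i * Y0 i)))
            / ((N - N₁ : ℕ) : ℝ))
        / (((N - N₁ : ℕ) : ℝ) - 1) := by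
    rw [Finset.sum_congr rfl fun T hT => s0sq_eq hT hNN hm0 Y0, ← Finset.sum_div]
    congr 1
    rw [Finset.sum_sub_distrib, ← Finset.sum_div, hA0, hB0]
  -- expectation of Vhat
  have hE : crdExp N N₁ (neymanVhat N N₁ Y1 Y0)
      = ((∑ T ∈ CRD N N₁, s1sq N N₁ Y1 T) / (N₁ : ℝ)
          + (∑ T ∈ CRD N N₁, s0sq N N₁ Y0 T) / ((N - N₁ : ℕ) : ℝ)) / (N.choose N₁ : ℝ) := by
    unfold crdExp neymanVhat
    rw [Finset.sum_add_distrib, ← Finset.sum_div, ← Finset.sum_div, hcard]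
  have hVar := crdVar_eq (N := N) (N₁ := N₁) (tauhat N N₁ Y1 Y0) (by rw [hcard]; exact hc0)
  have hVar' : crdVar N N₁ (tauhat N N₁ Y1 Y0)
      = (∑ T ∈ CRD N N₁, tauhat N N₁ Y1 Y0 T * tauhat N N₁ Y1 Y0 T) / (N.choose N₁ : ℝ)
        - ((∑ T ∈ CRD N N₁, tauhat N N₁ Y1 Y0 T) / (N.choose N₁ : ℝ)) ^ 2 := by
    rw [hVar, hcard]
  -- closed forms in terms of population quantities
  have A1 : (((N - 1).choose (N₁ - 1) : ℝ) * (∑ i, Y1 i * Y1 i)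
        - (((N - 1).choose (N₁ - 1) : ℝ) * (∑ i, Y1 i * Y1 i)
            + ((N - 2).choose (N₁ - 2) : ℝ)
                * ((∑ i, Y1 i) * (∑ i, Y1 i) - ∑ i, Y1 i * Y1 i)) / (N₁ : ℝ))
      / ((N₁ : ℝ) - 1)
      = (N.choose N₁ : ℝ) * (((N : ℝ) * (∑ i, Y1 i * Y1 i) - (∑ i, Y1 i) ^ 2)
          / ((N : ℝ) * ((N : ℝ) - 1))) := by
    rw [hp1, hp2, ← alg1 (N₁ : ℝ) (N : ℝ) (∑ i, Y1 i) (∑ i, Y1 i * Y1 i) hk0 hk1 hn0 hn1]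
    ring
  have A0 : (((N.choose N₁ : ℝ) * (∑ i, Y0 i * Y0 i)
          - ((N - 1).choose (N₁ - 1) : ℝ) * (∑ i, Y0 i * Y0 i))
        - ((N.choose N₁ : ℝ) * ((∑ i, Y0 i) * (∑ i, Y0 i))
            - (2 * (∑ i, Y0 i)) * (((N - 1).choose (N₁ - 1) : ℝ) * ∑ i, Y0 i)
            + (((N - 1).choose (N₁ - 1) : ℝ) * (∑ i, Y0 i * Y0 i)
                + ((N - 2).choose (N₁ - 2) : ℝ)
                    * ((∑ i, Y0 i) * (∑ i, Y0 i) - ∑ i, Y0 i * Y0 i)))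
          / ((N - N₁ : ℕ) : ℝ))
      / (((N - N₁ : ℕ) : ℝ) - 1)
      = (N.choose N₁ : ℝ) * (((N : ℝ) * (∑ i, Y0 i * Y0 i) - (∑ i, Y0 i) ^ 2)
          / ((N : ℝ) * ((N : ℝ) - 1))) := by
    rw [hp1, hp2, ← alg0 (N₁ : ℝ) ((N - N₁ : ℕ) : ℝ) (N : ℝ) (∑ i, Y0 i) (∑ i, Y0 i * Y0 i)
      hk0 hm0 hm1 hn0 hn1 hnm]
    ring
  have A2six : (1 / (N₁ : ℝ) ^ 2) * (((N - 1).choose (N₁ - 1) : ℝ) * (∑ i, Y1 i * Y1 i)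
            + ((N - 2).choose (N₁ - 2) : ℝ)
                * ((∑ i, Y1 i) * (∑ i, Y1 i) - ∑ i, Y1 i * Y1 i))
        + (2 / ((N₁ : ℝ) * ((N - N₁ : ℕ) : ℝ)))
            * (((N - 1).choose (N₁ - 1) : ℝ) * (∑ i, Y1 i * Y0 i)
                + ((N - 2).choose (N₁ - 2) : ℝ)
                    * ((∑ i, Y1 i) * (∑ i, Y0 i) - ∑ i, Y1 i * Y0 i))
        + (1 / ((N - N₁ : ℕ) : ℝ) ^ 2)
            * (((N - 1).choose (N₁ - 1) : ℝ) * (∑ i, Y0 i * Y0 i)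
                + ((N - 2).choose (N₁ - 2) : ℝ)
                    * ((∑ i, Y0 i) * (∑ i, Y0 i) - ∑ i, Y0 i * Y0 i))
        + (-2 * (∑ i, Y0 i) / ((N₁ : ℝ) * ((N - N₁ : ℕ) : ℝ)))
            * (((N - 1).choose (N₁ - 1) : ℝ) * ∑ i, Y1 i)
        + (-2 * (∑ i, Y0 i) / ((N - N₁ : ℕ) : ℝ) ^ 2)
            * (((N - 1).choose (N₁ - 1) : ℝ) * ∑ i, Y0 i)
        + (N.choose N₁ : ℝ) * ((∑ i, Y0 i) * (∑ i, Y0 i) / ((N - N₁ : ℕ) : ℝ) ^ 2)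
      = (N.choose N₁ : ℝ) *
          ((1 / (N₁ : ℝ) ^ 2) * (((N₁ : ℝ) / (N : ℝ)) * (∑ i, Y1 i * Y1 i)
              + ((N₁ : ℝ) * ((N₁ : ℝ) - 1) / ((N : ℝ) * ((N : ℝ) - 1)))
                  * ((∑ i, Y1 i) * (∑ i, Y1 i) - ∑ i, Y1 i * Y1 i))
            + (2 / ((N₁ : ℝ) * ((N - N₁ : ℕ) : ℝ)))
                * (((N₁ : ℝ) / (N : ℝ)) * (∑ i, Y1 i * Y0 i)
                    + ((N₁ : ℝ) * ((N₁ : ℝ) - 1) / ((N : ℝ) * ((N : ℝ) - 1)))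
                        * ((∑ i, Y1 i) * (∑ i, Y0 i) - ∑ i, Y1 i * Y0 i))
            + (1 / ((N - N₁ : ℕ) : ℝ) ^ 2)
                * (((N₁ : ℝ) / (N : ℝ)) * (∑ i, Y0 i * Y0 i)
                    + ((N₁ : ℝ) * ((N₁ : ℝ) - 1) / ((N : ℝ) * ((N : ℝ) - 1)))
                        * ((∑ i, Y0 i) * (∑ i, Y0 i) - ∑ i, Y0 i * Y0 i))
            + (-2 * (∑ i, Y0 i) / ((N₁ : ℝ) * ((N - N₁ : ℕ) : ℝ)))
                * (((N₁ : ℝ) / (N : ℝ)) * ∑ i, Y1 i)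
            + (-2 * (∑ i, Y0 i) / ((N - N₁ : ℕ) : ℝ) ^ 2)
                * (((N₁ : ℝ) / (N : ℝ)) * ∑ i, Y0 i)
            + (∑ i, Y0 i) * (∑ i, Y0 i) / ((N - N₁ : ℕ) : ℝ) ^ 2) := by
    rw [hp1, hp2]
    ring
  have AEt : ((((N - 1).choose (N₁ - 1) : ℝ) * ∑ i, Y1 i) / (N₁ : ℝ)
        - ((N.choose N₁ : ℝ) * (∑ i, Y0 i)
            - ((N - 1).choose (N₁ - 1) : ℝ) * ∑ i, Y0 i) / ((N - N₁ : ℕ) : ℝ))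
        / (N.choose N₁ : ℝ)
      = ((N₁ : ℝ) / (N : ℝ)) * (∑ i, Y1 i) / (N₁ : ℝ)
        - ((∑ i, Y0 i) - ((N₁ : ℝ) / (N : ℝ)) * (∑ i, Y0 i)) / ((N - N₁ : ℕ) : ℝ) := by
    rw [hp1]
    field_simp
  have hSd : (∑ j, (Y1 j - Y0 j)) = (∑ i, Y1 i) - ∑ i, Y0 i := Finset.sum_sub_distrib _ _
  have hX : ∑ i, ((Y1 i - Y0 i) - ((∑ i, Y1 i) - ∑ i, Y0 i) / (N : ℝ)) ^ 2
      = ((N : ℝ) * ((∑ i, Y1 i * Y1 i) + (∑ i, Y0 i * Y0 i) - 2 * (∑ i, Y1 i * Y0 i))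
          - ((∑ i, Y1 i) - ∑ i, Y0 i) ^ 2) / (N : ℝ) := by
    have ptX : ∀ i ∈ (univ : Finset (Fin N)),
        ((Y1 i - Y0 i) - ((∑ i, Y1 i) - ∑ i, Y0 i) / (N : ℝ)) ^ 2
          = (Y1 i * Y1 i + Y0 i * Y0 i
              - (2 : ℝ) * (Y1 i * Y0 i)
              - (2 * (((∑ i, Y1 i) - ∑ i, Y0 i) / (N : ℝ))) * (Y1 i - Y0 i))
            + (((∑ i, Y1 i) - ∑ i, Y0 i) / (N : ℝ)) ^ 2 := by
      intro i _
      ring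
    rw [Finset.sum_congr rfl ptX, Finset.sum_add_distrib, Finset.sum_sub_distrib,
      Finset.sum_sub_distrib, Finset.sum_add_distrib, ← Finset.mul_sum, ← Finset.mul_sum,
      Finset.sum_sub_distrib, Finset.sum_const, card_univ, Fintype.card_fin, nsmul_eq_mul]
    field_simp
    ring
  have part1 : crdExp N N₁ (neymanVhat N N₁ Y1 Y0) - crdVar N N₁ (tauhat N N₁ Y1 Y0)
      = ((∑ i, ((Y1 i - Y0 i) - (∑ j, (Y1 j - Y0 j)) / (N : ℝ)) ^ 2)
          / ((N : ℝ) - 1)) / (N : ℝ) := by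
    rw [hE, hS1, hS0, hVar', hT1, hT2, A1, A0, A2six, AEt, hSd, hX,
      mul_div_cancel_left₀ _ hc0,
      alg2 (N₁ : ℝ) ((N - N₁ : ℕ) : ℝ) (N : ℝ) (∑ i, Y1 i) (∑ i, Y0 i)
        (∑ i, Y1 i * Y1 i) (∑ i, Y0 i * Y0 i) (∑ i, Y1 i * Y0 i) hk0 hm0 hn0 hn1 hnm]
    have hsimp : ((N.choose N₁ : ℝ) * (((N : ℝ) * (∑ i, Y1 i * Y1 i) - (∑ i, Y1 i) ^ 2)
            / ((N : ℝ) * ((N : ℝ) - 1))) / (N₁ : ℝ)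
          + (N.choose N₁ : ℝ) * (((N : ℝ) * (∑ i, Y0 i * Y0 i) - (∑ i, Y0 i) ^ 2)
            / ((N : ℝ) * ((N : ℝ) - 1))) / ((N - N₁ : ℕ) : ℝ)) / (N.choose N₁ : ℝ)
        = ((N : ℝ) * (∑ i, Y1 i * Y1 i) - (∑ i, Y1 i) ^ 2)
            / ((N : ℝ) * ((N : ℝ) - 1)) / (N₁ : ℝ)
          + ((N : ℝ) * (∑ i, Y0 i * Y0 i) - (∑ i, Y0 i) ^ 2)
            / ((N : ℝ) * ((N : ℝ) - 1)) / ((N - N₁ : ℕ) : ℝ) := by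
      field_simp
    rw [hsimp]
    field_simp
    ring
  have hXnn : (0 : ℝ) ≤ ∑ i, ((Y1 i - Y0 i) - (∑ j, (Y1 j - Y0 j)) / (N : ℝ)) ^ 2 :=
    Finset.sum_nonneg fun i _ => sq_nonneg _
  have hn1pos : (0 : ℝ) < (N : ℝ) - 1 := by linarith
  have hnpos : (0 : ℝ) < (N : ℝ) := by linarith
  have part2 : (0 : ℝ) ≤ ((∑ i, ((Y1 i - Y0 i) - (∑ j, (Y1 j - Y0 j)) / (N : ℝ)) ^ 2)
      / ((N : ℝ) - 1)) / (N : ℝ) :=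
    div_nonneg (div_nonneg hXnn hn1pos.le) hnpos.le
  have part3 : crdVar N N₁ (tauhat N N₁ Y1 Y0) ≤ crdExp N N₁ (neymanVhat N N₁ Y1 Y0) := by
    linarith [part1, part2]
  have hzero : (∑ i, ((Y1 i - Y0 i) - (∑ j, (Y1 j - Y0 j)) / (N : ℝ)) ^ 2) = 0
      ↔ ∀ i, Y1 i - Y0 i = (∑ j, (Y1 j - Y0 j)) / (N : ℝ) := by
    rw [Finset.sum_eq_zero_iff_of_nonneg fun i _ => sq_nonneg _]
    constructor
    · intro h i
      have h2 := h i (mem_univ i)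
      rw [pow_eq_zero_iff (two_ne_zero), sub_eq_zero] at h2
      exact h2
    · intro h i _
      rw [h i]
      ring
  have part4 : crdExp N N₁ (neymanVhat N N₁ Y1 Y0) = crdVar N N₁ (tauhat N N₁ Y1 Y0)
      ↔ ∀ i, Y1 i - Y0 i = (∑ j, (Y1 j - Y0 j)) / (N : ℝ) := by
    rw [← sub_eq_zero, part1, div_eq_zero_iff, div_eq_zero_iff]
    simp only [hn0, hn1, or_false]
    exact hzero
  have part5 : (∀ i, Y1 i - Y0 i = (∑ j, (Y1 j - Y0 j)) / (N : ℝ))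
      ↔ (∑ i, ((Y1 i - Y0 i) - (∑ j, (Y1 j - Y0 j)) / (N : ℝ)) ^ 2) / ((N : ℝ) - 1) = 0 := by
    rw [div_eq_zero_iff]
    simp only [hn1, or_false]
    exact hzero.symm
  exact ⟨part1, part2, part3, part4, part5⟩
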